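/- The identity 1/9 = ∑_{i=0}^{∞} 1/((2i+1)(2i+5)(2i+3)²) + 2∑_{i=1}^{∞} 1/((2i−1)²(2i+3)²) holds. -/
import Mathlib

open Filter Finset

-- telescoping witness
noncomputable def gg (n : ℕ) : ℝ := ((n : ℝ) + 1) / ((2 * n + 1) ^ 2 * (2 * n + 3) ^ 2)

lemma gpos (n : ℕ) : (0:ℝ) < (2 * (n:ℝ) + 1) ^ 2 * (2 * n + 3) ^ 2 := by positivity

lemma key (n : ℕ) :
    (1 : ℝ) / ((2 * (n : ℝ) + 1) * (2 * n + 5) * (2 * n + 3) ^ 2)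
      + 2 * ((1 : ℝ) / ((2 * ((n:ℝ) + 1) - 1) ^ 2 * (2 * ((n:ℝ) + 1) + 3) ^ 2))
    = gg n - gg (n + 1) := by
  unfold gg
  have h1 : (0:ℝ) < 2 * (n:ℝ) + 1 := by positivity
  have h2 : (0:ℝ) < 2 * (n:ℝ) + 3 := by positivity
  have h3 : (0:ℝ) < 2 * (n:ℝ) + 5 := by positivity
  have h1' := h1.ne'
  have h2' := h2.ne'
  have h3' := h3.ne'
  have e1 : (2*((n:ℝ)+1)-1) = 2*(n:ℝ)+1 := by ring
  have e2 : (2*((n:ℝ)+1)+3) = 2*(n:ℝ)+5 := by ring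
  push_cast
  rw [e1, e2]
  field_simp
  ring

lemma tnn (n : ℕ) : (0:ℝ) ≤ (1 : ℝ) / ((2 * (n : ℝ) + 1) * (2 * n + 5) * (2 * n + 3) ^ 2)
      + 2 * ((1 : ℝ) / ((2 * ((n:ℝ) + 1) - 1) ^ 2 * (2 * ((n:ℝ) + 1) + 3) ^ 2)) := by
  have h1 : (0:ℝ) < 2 * (n:ℝ) + 1 := by positivity
  positivity

lemma hsum : HasSum (fun n : ℕ =>
    (1 : ℝ) / ((2 * (n : ℝ) + 1) * (2 * n + 5) * (2 * n + 3) ^ 2)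
      + 2 * ((1 : ℝ) / ((2 * ((n:ℝ) + 1) - 1) ^ 2 * (2 * ((n:ℝ) + 1) + 3) ^ 2))) (1/9) := by
  rw [hasSum_iff_tendsto_nat_of_nonneg tnn]
  have hsr : ∀ N : ℕ, ∑ n ∈ range N, ((1 : ℝ) / ((2 * (n : ℝ) + 1) * (2 * n + 5) * (2 * n + 3) ^ 2)
      + 2 * ((1 : ℝ) / ((2 * ((n:ℝ) + 1) - 1) ^ 2 * (2 * ((n:ℝ) + 1) + 3) ^ 2)))
      = gg 0 - gg N := by
    intro N
    rw [show ∀ N:ℕ, gg 0 - gg N = ∑ n ∈ range N, (gg n - gg (n+1)) from fun N => (sum_range_sub' gg N).symm]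
    exact Finset.sum_congr rfl fun n _ => key n
  simp only [hsr]
  have h0 : gg 0 = 1/9 := by norm_num [gg]
  have hlim : Tendsto gg atTop (nhds 0) := by
    have hle : ∀ n : ℕ, gg n ≤ 1 / ((n:ℝ) + 1) := by
      intro n
      unfold gg
      rw [div_le_div_iff₀ (gpos n) (by positivity)]
      nlinarith [sq_nonneg ((n:ℝ)), sq_nonneg ((n:ℝ)+1), Nat.cast_nonneg (α := ℝ) n]
    have hge : ∀ n : ℕ, 0 ≤ gg n := fun n => by unfold gg; positivity
    exact squeeze_zero hge hle tendsto_one_div_add_atTop_nhds_zero_nat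
  have := (tendsto_const_nhds (x := gg 0)).sub hlim
  simpa [h0] using this

theorem stmt13 :
    (1 : ℝ) / 9
      = (∑' n : ℕ, (1 : ℝ) / ((2 * (n : ℝ) + 1) * (2 * n + 5) * (2 * n + 3) ^ 2))
        + 2 * (∑' n : ℕ, (1 : ℝ) /
            ((2 * (n + 1 : ℝ) - 1) ^ 2 * (2 * (n + 1 : ℝ) + 3) ^ 2)) := by
  have hS := hsum
  have han : ∀ n : ℕ, (0:ℝ) ≤ (1 : ℝ) / ((2 * (n : ℝ) + 1) * (2 * n + 5) * (2 * n + 3) ^ 2) := by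
    intro n; positivity
  have hbn : ∀ n : ℕ, (0:ℝ) ≤ 2 * ((1 : ℝ) / ((2 * ((n:ℝ) + 1) - 1) ^ 2 * (2 * ((n:ℝ) + 1) + 3) ^ 2)) := by
    intro n; positivity
  have ha : Summable (fun n : ℕ => (1 : ℝ) / ((2 * (n : ℝ) + 1) * (2 * n + 5) * (2 * n + 3) ^ 2)) := by
    refine Summable.of_nonneg_of_le han (fun n => ?_) hS.summable
    have := hbn n; linarith
  have hb : Summable (fun n : ℕ => 2 * ((1 : ℝ) / ((2 * ((n:ℝ) + 1) - 1) ^ 2 * (2 * ((n:ℝ) + 1) + 3) ^ 2))) := by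
    refine Summable.of_nonneg_of_le hbn (fun n => ?_) hS.summable
    have := han n; linarith
  rw [← hS.tsum_eq, Summable.tsum_add ha hb, tsum_mul_left]
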